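/- For any n ∈ ℕ, any q > 0 and any s, t, i ∈ {1,…,n}, setting d = |s−t|, one has min(q^d, q^{−d}) ≤ μ_{n,q}(π(s)=i) / μ_{n,q}(π(t)=i) ≤ max(q^d, q^{−d}). -/

import Mathlib

open Filter Finset MeasureTheory

/-- Number of inversions of a permutation of `Fin n`. -/
def inversions (n : ℕ) (π : Equiv.Perm (Fin n)) : ℕ :=
  (Finset.univ.filter (fun p : Fin n × Fin n => p.1 < p.2 ∧ π p.2 < π p.1)).card

/-- The `(n,q)`-Mallows probability mass function on `S_n`. -/
noncomputable def mallowsPMF (n : ℕ) (q : ℝ) (π : Equiv.Perm (Fin n)) : ℝ :=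
  q ^ inversions n π / ∑ σ : Equiv.Perm (Fin n), q ^ inversions n σ

open Classical in
/-- The `(n,q)`-Mallows probability of an event `P` of permutations. -/
noncomputable def mallowsProb (n : ℕ) (q : ℝ) (P : Equiv.Perm (Fin n) → Prop) : ℝ :=
  ∑ π : Equiv.Perm (Fin n), if P π then mallowsPMF n q π else 0

/-- Expectation with respect to the `(n,q)`-Mallows measure. -/
noncomputable def mallowsExp (n : ℕ) (q : ℝ) (f : Equiv.Perm (Fin n) → ℝ) : ℝ :=
  ∑ π : Equiv.Perm (Fin n), mallowsPMF n q π * f π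

/-- Action of a permutation of `Fin n` on one-based indices `{1,…,n}`. -/
def permAct (n : ℕ) (π : Equiv.Perm (Fin n)) (i : ℕ) : ℕ :=
  if h : 1 ≤ i ∧ i ≤ n then ((π ⟨i - 1, by omega⟩ : Fin n) : ℕ) + 1 else i

/-- The limiting density `u(x,y,β)` from Starr's theorem. -/
noncomputable def mallowsU (x y β : ℝ) : ℝ :=
  if β = 0 then 1
  else (β / 2) * Real.sinh (β / 2) /
    (Real.exp (β / 4) * Real.cosh (β * (x - y) / 2)
      - Real.exp (-β / 4) * Real.cosh (β * (x + y - 1) / 2)) ^ 2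

lemma swap_adj_lt {n k : ℕ} (h : k + 1 < n) {x y : Fin n} (hxy : x < y)
    (hne : ¬(x = ⟨k, by omega⟩ ∧ y = ⟨k + 1, h⟩)) :
    Equiv.swap (⟨k, by omega⟩ : Fin n) ⟨k + 1, h⟩ x
      < Equiv.swap (⟨k, by omega⟩ : Fin n) ⟨k + 1, h⟩ y := by
  have hne' : ¬((x : ℕ) = k ∧ (y : ℕ) = k + 1) := by
    intro hc; exact hne ⟨Fin.ext hc.1, Fin.ext hc.2⟩
  have hxy' : (x : ℕ) < (y : ℕ) := hxy
  clear hne hxy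
  simp only [Equiv.swap_apply_def, Fin.lt_def]
  split_ifs <;> (simp only [Fin.ext_iff, Fin.val_mk] at *) <;> omega

lemma inversions_mul_swap {n k : ℕ} (h : k + 1 < n) (π : Equiv.Perm (Fin n)) :
    inversions n (π * Equiv.swap ⟨k, by omega⟩ ⟨k + 1, h⟩) = inversions n π + 1 ∨
    inversions n π = inversions n (π * Equiv.swap ⟨k, by omega⟩ ⟨k + 1, h⟩) + 1 := by
  set a : Fin n := ⟨k, by omega⟩ with ha_def
  set b : Fin n := ⟨k + 1, h⟩ with hb_def
  set τ := Equiv.swap a b with hτ_def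
  have hab : a < b := Fin.mk_lt_mk.mpr (Nat.lt_succ_self k)
  have hτa : τ a = b := Equiv.swap_apply_left a b
  have hτb : τ b = a := Equiv.swap_apply_right a b
  have hττ : ∀ x, τ (τ x) = x := fun x => Equiv.swap_apply_self a b x
  set S : Finset (Fin n × Fin n) :=
    univ.filter (fun p : Fin n × Fin n => p.1 < p.2 ∧ π p.2 < π p.1) with hS
  set S' : Finset (Fin n × Fin n) :=
    univ.filter (fun p : Fin n × Fin n => p.1 < p.2 ∧ (π * τ) p.2 < (π * τ) p.1) with hS'
  have key : ((S').erase (a, b)).card = (S.erase (a, b)).card := by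
    apply Finset.card_bij (fun p _ => (τ p.1, τ p.2))
    · rintro ⟨x, y⟩ hp
      rw [Finset.mem_erase, hS', Finset.mem_filter] at hp
      obtain ⟨hne, _, hxy, hlt⟩ := hp
      rw [Finset.mem_erase, hS, Finset.mem_filter]
      have hxy' : τ x < τ y := by
        apply swap_adj_lt h hxy
        intro hc
        exact hne (by rw [Prod.mk.injEq]; exact ⟨hc.1, hc.2⟩)
      refine ⟨?_, Finset.mem_univ _, hxy', hlt⟩
      intro hc
      have hx : x = b := by
        have := congrArg Prod.fst hc
        simp only at this
        have := congrArg τ this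
        rwa [hττ, hτa] at this
      have hy : y = a := by
        have := congrArg Prod.snd hc
        simp only at this
        have := congrArg τ this
        rwa [hττ, hτb] at this
      rw [hx, hy] at hxy
      exact absurd hab (not_lt.mpr hxy.le)
    · rintro ⟨x₁, y₁⟩ _ ⟨x₂, y₂⟩ _ hc
      have h1 := congrArg Prod.fst hc
      have h2 := congrArg Prod.snd hc
      simp only at h1 h2
      have h1' := congrArg τ h1
      have h2' := congrArg τ h2
      rw [hττ, hττ] at h1' h2'
      simp [h1', h2']
    · rintro ⟨x, y⟩ hp
      rw [Finset.mem_erase, hS, Finset.mem_filter] at hp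
      obtain ⟨hne, _, hxy, hlt⟩ := hp
      refine ⟨(τ x, τ y), ?_, by simp [hττ]⟩
      rw [Finset.mem_erase, hS', Finset.mem_filter]
      have hxy' : τ x < τ y := by
        apply swap_adj_lt h hxy
        intro hc
        exact hne (by rw [Prod.mk.injEq]; exact ⟨hc.1, hc.2⟩)
      refine ⟨?_, Finset.mem_univ _, hxy', ?_⟩
      · intro hc
        have hx : x = b := by
          have := congrArg Prod.fst hc
          simp only at this
          have := congrArg τ this
          rwa [hττ, hτa] at this
        have hy : y = a := by
          have := congrArg Prod.snd hc
          simp only at this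
          have := congrArg τ this
          rwa [hττ, hτb] at this
        rw [hx, hy] at hxy
        exact absurd hab (not_lt.mpr hxy.le)
      · simpa [Equiv.Perm.mul_apply, hττ] using hlt
  have hne_pi : π a ≠ π b := fun hc => absurd (π.injective hc) hab.ne
  have hmemS' : (a, b) ∈ S' ↔ π a < π b := by
    rw [hS', Finset.mem_filter]
    simp [Equiv.Perm.mul_apply, hτa, hτb, hab]
  have hmemS : (a, b) ∈ S ↔ π b < π a := by
    rw [hS, Finset.mem_filter]
    simp [hab]
  rcases lt_or_gt_of_ne hne_pi with hlt | hlt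
  · left
    have h1 : (a, b) ∈ S' := hmemS'.mpr hlt
    have h2 : (a, b) ∉ S := fun hc => absurd hlt (not_lt.mpr (hmemS.mp hc).le)
    have e1 : (S'.erase (a, b)).card + 1 = S'.card := Finset.card_erase_add_one h1
    have e2 : S.erase (a, b) = S := Finset.erase_eq_of_notMem h2
    show S'.card = S.card + 1
    rw [← e1, key, e2]
  · right
    have h1 : (a, b) ∈ S := hmemS.mpr hlt
    have h2 : (a, b) ∉ S' := fun hc => absurd hlt (not_lt.mpr (hmemS'.mp hc).le)
    have e1 : (S.erase (a, b)).card + 1 = S.card := Finset.card_erase_add_one h1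
    have e2 : S'.erase (a, b) = S' := Finset.erase_eq_of_notMem h2
    show S.card = S'.card + 1
    rw [← e1, ← key, e2]

noncomputable def mallowsW (n : ℕ) (q : ℝ) (a v : Fin n) : ℝ :=
  ∑ π : Equiv.Perm (Fin n), if π a = v then q ^ inversions n π else 0

lemma pow_min_le {q : ℝ} (hq : 0 < q) {l l' : ℕ} (h : l' = l + 1 ∨ l = l' + 1) :
    min q q⁻¹ * q ^ l ≤ q ^ l' := by
  have hp : (0:ℝ) < q ^ l := pow_pos hq _
  have hp' : (0:ℝ) < q ^ l' := pow_pos hq _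
  rcases h with h1 | h1
  · rw [h1, pow_succ]
    calc min q q⁻¹ * q ^ l ≤ q * q ^ l :=
          mul_le_mul_of_nonneg_right (min_le_left _ _) hp.le
      _ = q ^ l * q := mul_comm _ _
  · rw [h1, pow_succ]
    have h2 : min q q⁻¹ * q ≤ 1 := by
      calc min q q⁻¹ * q ≤ q⁻¹ * q := mul_le_mul_of_nonneg_right (min_le_right _ _) hq.le
        _ = 1 := inv_mul_cancel₀ hq.ne'
    calc min q q⁻¹ * (q ^ l' * q) = (min q q⁻¹ * q) * q ^ l' := by ring
      _ ≤ 1 * q ^ l' := mul_le_mul_of_nonneg_right h2 hp'.le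
      _ = _ := one_mul _

lemma pow_inv_step {n : ℕ} {q : ℝ} (hq : 0 < q) {k : ℕ} (h : k + 1 < n)
    (π : Equiv.Perm (Fin n)) :
    min q q⁻¹ * q ^ inversions n π
      ≤ q ^ inversions n (π * Equiv.swap ⟨k, by omega⟩ ⟨k + 1, h⟩) :=
  pow_min_le hq (inversions_mul_swap h π)

lemma mallowsW_step {n : ℕ} {q : ℝ} (hq : 0 < q) {k : ℕ} (h : k + 1 < n) (v : Fin n) :
    min q q⁻¹ * mallowsW n q ⟨k, by omega⟩ v ≤ mallowsW n q ⟨k + 1, h⟩ v ∧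
    min q q⁻¹ * mallowsW n q ⟨k + 1, h⟩ v ≤ mallowsW n q ⟨k, by omega⟩ v := by
  set a : Fin n := ⟨k, by omega⟩ with ha_def
  set b : Fin n := ⟨k + 1, h⟩ with hb_def
  set τ := Equiv.swap a b with hτ_def
  have hτa : τ a = b := Equiv.swap_apply_left a b
  have hτb : τ b = a := Equiv.swap_apply_right a b
  have hb : mallowsW n q b v
      = ∑ π : Equiv.Perm (Fin n), if π a = v then q ^ inversions n (π * τ) else 0 := by
    rw [mallowsW,
      ← Equiv.sum_comp (Equiv.mulRight τ)
        (fun π : Equiv.Perm (Fin n) => if π b = v then q ^ inversions n π else 0)]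
    apply Finset.sum_congr rfl
    intro π _
    simp [Equiv.Perm.mul_apply, hτb]
  have ha : mallowsW n q a v
      = ∑ π : Equiv.Perm (Fin n), if π b = v then q ^ inversions n (π * τ) else 0 := by
    rw [mallowsW,
      ← Equiv.sum_comp (Equiv.mulRight τ)
        (fun π : Equiv.Perm (Fin n) => if π a = v then q ^ inversions n π else 0)]
    apply Finset.sum_congr rfl
    intro π _
    simp [Equiv.Perm.mul_apply, hτa]
  constructor
  · rw [hb, mallowsW, Finset.mul_sum]
    apply Finset.sum_le_sum
    intro π _
    split_ifs
    · exact pow_inv_step hq h π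
    · simp
  · rw [ha, mallowsW, Finset.mul_sum]
    apply Finset.sum_le_sum
    intro π _
    split_ifs
    · exact pow_inv_step hq h π
    · simp

lemma mallowsW_chain {n : ℕ} {q : ℝ} (hq : 0 < q) (v : Fin n) :
    ∀ (d : ℕ) (a b : Fin n), ((a : ℕ) + d = (b : ℕ) ∨ (b : ℕ) + d = (a : ℕ)) →
    (min q q⁻¹) ^ d * mallowsW n q b v ≤ mallowsW n q a v := by
  have hm : 0 < min q q⁻¹ := lt_min hq (inv_pos.mpr hq)
  intro d
  induction d with
  | zero =>
    intro a b hab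
    have : a = b := Fin.ext (by omega)
    rw [this, pow_zero, one_mul]
  | succ d ih =>
    intro a b hab
    rcases hab with hab | hab
    · have ha1 : (a : ℕ) + 1 < n := by omega
      set a' : Fin n := ⟨(a : ℕ) + 1, ha1⟩ with ha'_def
      have h1 : (min q q⁻¹) ^ d * mallowsW n q b v ≤ mallowsW n q a' v :=
        ih a' b (Or.inl (by simp [ha'_def]; omega))
      have h2 : min q q⁻¹ * mallowsW n q a' v ≤ mallowsW n q a v := by
        have := (mallowsW_step (n := n) hq ha1 v).2
        have haa : (⟨(a : ℕ), by omega⟩ : Fin n) = a := Fin.ext rfl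
        rwa [haa] at this
      calc (min q q⁻¹) ^ (d + 1) * mallowsW n q b v
          = min q q⁻¹ * ((min q q⁻¹) ^ d * mallowsW n q b v) := by ring
        _ ≤ min q q⁻¹ * mallowsW n q a' v := mul_le_mul_of_nonneg_left h1 hm.le
        _ ≤ mallowsW n q a v := h2
    · have hb1 : (b : ℕ) + 1 < n := by omega
      set b' : Fin n := ⟨(b : ℕ) + 1, hb1⟩ with hb'_def
      have h1 : (min q q⁻¹) ^ d * mallowsW n q b' v ≤ mallowsW n q a v :=
        ih a b' (Or.inr (by simp [hb'_def]; omega))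
      have h2 : min q q⁻¹ * mallowsW n q b v ≤ mallowsW n q b' v := by
        have := (mallowsW_step (n := n) hq hb1 v).1
        have hbb : (⟨(b : ℕ), by omega⟩ : Fin n) = b := Fin.ext rfl
        rwa [hbb] at this
      calc (min q q⁻¹) ^ (d + 1) * mallowsW n q b v
          = (min q q⁻¹) ^ d * (min q q⁻¹ * mallowsW n q b v) := by ring
        _ ≤ (min q q⁻¹) ^ d * mallowsW n q b' v :=
            mul_le_mul_of_nonneg_left h2 (pow_pos hm d).le
        _ ≤ mallowsW n q a v := h1

lemma mallowsW_pos {n : ℕ} {q : ℝ} (hq : 0 < q) (a v : Fin n) : 0 < mallowsW n q a v := by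
  have hterm : (if (Equiv.swap a v) a = v then q ^ inversions n (Equiv.swap a v) else 0)
      ≤ mallowsW n q a v := by
    apply Finset.single_le_sum (f := fun π : Equiv.Perm (Fin n) =>
      if π a = v then q ^ inversions n π else 0)
    · intro π _
      split_ifs
      · exact (pow_pos hq _).le
      · exact le_refl 0
    · exact Finset.mem_univ _
  rw [Equiv.swap_apply_left, if_pos rfl] at hterm
  exact lt_of_lt_of_le (pow_pos hq _) hterm

lemma mallowsZ_pos {n : ℕ} {q : ℝ} (hq : 0 < q) :
    0 < ∑ σ : Equiv.Perm (Fin n), q ^ inversions n σ :=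
  Finset.sum_pos (fun σ _ => pow_pos hq _) Finset.univ_nonempty

lemma mallowsProb_eq_W (n : ℕ) (q : ℝ) (a v : Fin n) :
    mallowsProb n q (fun π => π a = v)
      = mallowsW n q a v / ∑ σ : Equiv.Perm (Fin n), q ^ inversions n σ := by
  rw [mallowsProb, mallowsW, Finset.sum_div]
  apply Finset.sum_congr rfl
  intro π _
  rw [mallowsPMF]
  split_ifs <;> simp

lemma minmax_pow {q : ℝ} (hq : 0 < q) (d : ℕ) :
    min (q ^ d) (q⁻¹ ^ d) = (min q q⁻¹) ^ d ∧
    max (q ^ d) (q⁻¹ ^ d) = (max q q⁻¹) ^ d := by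
  rcases le_total q 1 with h | h
  · have h2 : q ≤ q⁻¹ := h.trans ((one_le_inv₀ hq).mpr h)
    have h3 : q ^ d ≤ q⁻¹ ^ d := pow_le_pow_left₀ hq.le h2 d
    rw [min_eq_left h3, max_eq_right h3, min_eq_left h2, max_eq_right h2]
    exact ⟨rfl, rfl⟩
  · have h2 : q⁻¹ ≤ q := by
      have hinv : q⁻¹ * q = 1 := inv_mul_cancel₀ hq.ne'
      nlinarith
    have h3 : q⁻¹ ^ d ≤ q ^ d := pow_le_pow_left₀ (inv_pos.mpr hq).le h2 d
    rw [min_eq_right h3, max_eq_left h3, min_eq_right h2, max_eq_left h2]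
    exact ⟨rfl, rfl⟩

lemma max_eq_inv_min {q : ℝ} (hq : 0 < q) : max q q⁻¹ = (min q q⁻¹)⁻¹ := by
  rcases le_total q 1 with h | h
  · have h2 : q ≤ q⁻¹ := h.trans ((one_le_inv₀ hq).mpr h)
    rw [min_eq_left h2, max_eq_right h2]
  · have h2 : q⁻¹ ≤ q := by
      have hinv : q⁻¹ * q = 1 := inv_mul_cancel₀ hq.ne'
      nlinarith
    rw [min_eq_right h2, max_eq_left h2, inv_inv]

lemma mallowsW_ratio_bound {n : ℕ} {q : ℝ} (hq : 0 < q) (a b v : Fin n) (d : ℕ)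
    (hdist : ((a : ℕ) + d = (b : ℕ)) ∨ ((b : ℕ) + d = (a : ℕ))) :
    min (q ^ d) (q⁻¹ ^ d) ≤ mallowsW n q a v / mallowsW n q b v ∧
    mallowsW n q a v / mallowsW n q b v ≤ max (q ^ d) (q⁻¹ ^ d) := by
  have hm : 0 < min q q⁻¹ := lt_min hq (inv_pos.mpr hq)
  have hWa : 0 < mallowsW n q a v := mallowsW_pos hq a v
  have hWb : 0 < mallowsW n q b v := mallowsW_pos hq b v
  have h1 : (min q q⁻¹) ^ d * mallowsW n q b v ≤ mallowsW n q a v :=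
    mallowsW_chain hq v d a b hdist
  have h2 : (min q q⁻¹) ^ d * mallowsW n q a v ≤ mallowsW n q b v :=
    mallowsW_chain hq v d b a hdist.symm
  obtain ⟨emin, emax⟩ := minmax_pow hq d
  constructor
  · rw [emin, le_div_iff₀ hWb]
    exact h1
  · rw [emax, max_eq_inv_min hq, inv_pow, div_le_iff₀ hWb, mul_comm]
    have hpd : 0 < (min q q⁻¹) ^ d := pow_pos hm d
    calc mallowsW n q a v
        = ((min q q⁻¹) ^ d)⁻¹ * ((min q q⁻¹) ^ d * mallowsW n q a v) := by
          rw [inv_mul_cancel_left₀ hpd.ne']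
      _ ≤ ((min q q⁻¹) ^ d)⁻¹ * mallowsW n q b v :=
          mul_le_mul_of_nonneg_left h2 (inv_pos.mpr hpd).le
      _ = mallowsW n q b v * ((min q q⁻¹) ^ d)⁻¹ := mul_comm _ _

set_option maxHeartbeats 1000000 in
/-- **Lemma 5.4.** For any `s, t, i ∈ {1,…,n}` and `q > 0`, with `d = |s − t|`,
`min(q^d, q^{−d}) ≤ μ_{n,q}(π(s)=i) / μ_{n,q}(π(t)=i) ≤ max(q^d, q^{−d})`. -/
theorem mallows_index_ratio_bound (n : ℕ) (q : ℝ) (hq : 0 < q)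
    (s t i : ℕ) (hs : 1 ≤ s ∧ s ≤ n) (ht : 1 ≤ t ∧ t ≤ n) (hi : 1 ≤ i ∧ i ≤ n) :
    min (q ^ (max s t - min s t)) (q⁻¹ ^ (max s t - min s t))
        ≤ mallowsProb n q (fun π => permAct n π s = i)
            / mallowsProb n q (fun π => permAct n π t = i) ∧
      mallowsProb n q (fun π => permAct n π s = i)
          / mallowsProb n q (fun π => permAct n π t = i)
        ≤ max (q ^ (max s t - min s t)) (q⁻¹ ^ (max s t - min s t)) := by
  obtain ⟨hs1, hs2⟩ := hs
  obtain ⟨ht1, ht2⟩ := ht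
  obtain ⟨hi1, hi2⟩ := hi
  have hn : 0 < n := by omega
  set a : Fin n := ⟨s - 1, by omega⟩ with ha_def
  set b : Fin n := ⟨t - 1, by omega⟩ with hb_def
  set v : Fin n := ⟨i - 1, by omega⟩ with hv_def
  have hPs : ∀ u : ℕ, 1 ≤ u → u ≤ n → ∀ (hu : u - 1 < n) (π : Equiv.Perm (Fin n)),
      (permAct n π u = i) ↔ (π ⟨u - 1, hu⟩ = v) := by
    intro u hu1 hu2 hu π
    rw [permAct, dif_pos ⟨hu1, hu2⟩, Fin.ext_iff]
    have hlt : ((π ⟨u - 1, hu⟩ : Fin n) : ℕ) < n := (π _).isLt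
    simp only [hv_def]
    constructor <;> intro h <;> omega
  have e1 : mallowsProb n q (fun π => permAct n π s = i)
      = mallowsProb n q (fun π => π a = v) :=
    congrArg _ (funext fun π => propext (hPs s hs1 hs2 (by omega) π))
  have e2 : mallowsProb n q (fun π => permAct n π t = i)
      = mallowsProb n q (fun π => π b = v) :=
    congrArg _ (funext fun π => propext (hPs t ht1 ht2 (by omega) π))
  rw [e1, e2, mallowsProb_eq_W, mallowsProb_eq_W]
  have hZ : 0 < ∑ σ : Equiv.Perm (Fin n), q ^ inversions n σ := mallowsZ_pos hq
  have hdiv : mallowsW n q a v / (∑ σ : Equiv.Perm (Fin n), q ^ inversions n σ)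
      / (mallowsW n q b v / (∑ σ : Equiv.Perm (Fin n), q ^ inversions n σ))
      = mallowsW n q a v / mallowsW n q b v := by
    rw [div_div_div_comm, div_self hZ.ne', div_one]
  rw [hdiv]
  apply mallowsW_ratio_bound hq a b v (max s t - min s t)
  simp only [ha_def, hb_def]
  omega
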